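/- For ν ∈ [-1/2, 1/2], the first Rayleigh sum of the positive zeros h_{ν,n} of the Struve function H_ν satisfies ∑_{n≥1} 1/h_{ν,n}² = 1/(3(2ν+3)). -/

import Mathlib

set_option maxHeartbeats 1000000

open Finset in
lemma weier_lower (f : ℕ → ℝ) (h0 : ∀ n, 0 ≤ f n) (h1 : ∀ n, f n ≤ 1) (F : Finset ℕ) :
    1 - ∑ n ∈ F, f n ≤ ∏ n ∈ F, (1 - f n) := by
  induction F using Finset.cons_induction with
  | empty => simp
  | cons a s ha ih =>
    rw [Finset.prod_cons, Finset.sum_cons]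
    have hs : (0:ℝ) ≤ ∑ n ∈ s, f n := Finset.sum_nonneg fun n _ => h0 n
    nlinarith [h0 a, h1 a]

lemma exp_neg_quad (s : ℝ) (hs : 0 ≤ s) : Real.exp (-s) ≤ 1 - s + s ^ 2 := by
  have h1 : (1:ℝ) + s ≤ Real.exp s := by linarith [Real.add_one_le_exp s]
  have h2 : (0:ℝ) < 1 + s := by linarith
  have h3 : Real.exp (-s) = (Real.exp s)⁻¹ := Real.exp_neg s
  have h4 : (Real.exp s)⁻¹ ≤ (1 + s)⁻¹ := by
    apply inv_anti₀ h2 h1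
  have h5 : (1 + s)⁻¹ ≤ 1 - s + s ^ 2 := by
    rw [inv_le_iff_one_le_mul₀ h2]
    nlinarith
  linarith [h3 ▸ h4]

lemma Gamma_ge (k : ℕ) : Real.Gamma (3/2) ≤ Real.Gamma ((k:ℝ) + 3/2) := by
  induction k with
  | zero => simp
  | succ n ih =>
    have hpos : (0:ℝ) < (n:ℝ) + 3/2 := by positivity
    have heq : ((n:ℝ) + 1 + 3/2) = ((n:ℝ) + 3/2) + 1 := by ring
    rw [Nat.cast_succ, heq, Real.Gamma_add_one hpos.ne']
    have hg : 0 < Real.Gamma ((n:ℝ) + 3/2) := Real.Gamma_pos_of_pos hpos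
    nlinarith [Nat.cast_nonneg (α := ℝ) n]

lemma poch_ge (k : ℕ) (t : ℝ) (ht : 1 ≤ t) : 1 ≤ (ascPochhammer ℝ k).eval t := by
  induction k with
  | zero => simp
  | succ n ih =>
    rw [ascPochhammer_succ_eval]
    have : (1:ℝ) ≤ t + n := by
      have := Nat.cast_nonneg (α := ℝ) n; linarith
    nlinarith

lemma Gamma_three_halves : Real.Gamma (3/2) = Real.sqrt Real.pi / 2 := by
  have h : (3/2 : ℝ) = 1/2 + 1 := by norm_num
  rw [h, Real.Gamma_add_one (by norm_num), Real.Gamma_one_half_eq]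
  ring

lemma Gamma_five_halves : Real.Gamma (5/2) = 3 * Real.sqrt Real.pi / 4 := by
  have h : (5/2 : ℝ) = 3/2 + 1 := by norm_num
  rw [h, Real.Gamma_add_one (by norm_num), Gamma_three_halves]
  ring

/-- For `ν ∈ [-1/2, 1/2]`, if `h n` are the positive zeros of the Struve function `H_ν`
(encoded by the factorization
`√π 2^ν z^{-ν-1} Γ(ν+3/2) H_ν(z) = (√π/2) ∑ (-1)^k z^{2k}/(4^k Γ(k+3/2)(ν+3/2)_k)
  = ∏ (1 - z²/h_k²)`),
then `∑ 1/h_n² = 1/(3(2ν+3))`. -/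
theorem rayleigh_sum_struve (ν : ℝ) (hν : ν ∈ Set.Icc (-(1:ℝ)/2) (1/2)) (h : ℕ → ℝ)
    (hpos : ∀ n, 0 < h n) (hmono : StrictMono h)
    (hsum : Summable (fun n => 1 / (h n) ^ 2))
    (hfact : ∀ x : ℝ,
      (Real.sqrt Real.pi / 2) *
        ∑' k : ℕ, (-1 : ℝ) ^ k * x ^ (2 * k) /
          (4 ^ k * Real.Gamma ((k : ℝ) + 3/2) * (ascPochhammer ℝ k).eval (ν + 3/2))
      = ∏' n : ℕ, (1 - x ^ 2 / (h n) ^ 2)) :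
    ∑' n : ℕ, 1 / (h n) ^ 2 = 1 / (3 * (2 * ν + 3)) := by
  obtain ⟨hν1, hν2⟩ := hν
  set S := ∑' n : ℕ, 1 / (h n) ^ 2 with hSdef
  set A := 1 / (3 * (2 * ν + 3)) with hAdef
  have hSnn : 0 ≤ S := tsum_nonneg (fun n => by positivity)
  have hν32 : (1:ℝ) ≤ ν + 3/2 := by linarith
  have hsqpi : 0 < Real.sqrt Real.pi := Real.sqrt_pos.mpr Real.pi_pos
  -- key estimate
  have key : ∀ x : ℝ, 0 < x → x ≤ 1 → x ≤ h 0 / 2 →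
      |S - A| ≤ (4/3 + S^2) * x^2 := by
    intro x hx0 hx1 hxh
    have hx2 : (0:ℝ) < x ^ 2 := by positivity
    -- the power series side
    set a : ℕ → ℝ := fun k => (-1 : ℝ) ^ k * x ^ (2 * k) /
        (4 ^ k * Real.Gamma ((k : ℝ) + 3/2) * (ascPochhammer ℝ k).eval (ν + 3/2)) with hadef
    have hden : ∀ k : ℕ, (0:ℝ) < 4 ^ k * Real.Gamma ((k : ℝ) + 3/2) *
        (ascPochhammer ℝ k).eval (ν + 3/2) := by
      intro k
      have h1 : (0:ℝ) < Real.Gamma ((k : ℝ) + 3/2) := Real.Gamma_pos_of_pos (by positivity)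
      have h2 : (0:ℝ) < (ascPochhammer ℝ k).eval (ν + 3/2) := lt_of_lt_of_le one_pos (poch_ge k _ hν32)
      positivity
    have habs : ∀ k : ℕ, |a k| = x ^ (2 * k) /
        (4 ^ k * Real.Gamma ((k : ℝ) + 3/2) * (ascPochhammer ℝ k).eval (ν + 3/2)) := by
      intro k
      rw [hadef]
      rw [abs_div, abs_mul, abs_pow, abs_pow, abs_neg, abs_one, one_pow, one_mul,
        abs_of_pos hx0, abs_of_pos (hden k)]
    have hbound : ∀ k : ℕ, ‖a k‖ ≤ (2 / Real.sqrt Real.pi) * (1/4 : ℝ) ^ k := by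
      intro k
      rw [Real.norm_eq_abs, habs k]
      have hnum : x ^ (2 * k) ≤ 1 := pow_le_one₀ hx0.le hx1
      have hden2 : (4:ℝ) ^ k * (Real.sqrt Real.pi / 2) ≤
          4 ^ k * Real.Gamma ((k : ℝ) + 3/2) * (ascPochhammer ℝ k).eval (ν + 3/2) := by
        have hg := Gamma_ge k
        rw [Gamma_three_halves] at hg
        have hp := poch_ge k _ hν32
        have h4 : (0:ℝ) < 4 ^ k := by positivity
        have hg0 : (0:ℝ) < Real.Gamma ((k:ℝ) + 3/2) :=
          Real.Gamma_pos_of_pos (by positivity)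
        calc (4:ℝ) ^ k * (Real.sqrt Real.pi / 2) ≤ 4 ^ k * Real.Gamma ((k:ℝ) + 3/2) :=
              mul_le_mul_of_nonneg_left hg h4.le
          _ = 4 ^ k * Real.Gamma ((k:ℝ) + 3/2) * 1 := (mul_one _).symm
          _ ≤ 4 ^ k * Real.Gamma ((k:ℝ) + 3/2) * (ascPochhammer ℝ k).eval (ν + 3/2) :=
              mul_le_mul_of_nonneg_left hp (by positivity)
      have hdp : (0:ℝ) < (4:ℝ) ^ k * (Real.sqrt Real.pi / 2) := by positivity
      calc x ^ (2 * k) / (4 ^ k * Real.Gamma ((k : ℝ) + 3/2) * (ascPochhammer ℝ k).eval (ν + 3/2))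
          ≤ 1 / ((4:ℝ) ^ k * (Real.sqrt Real.pi / 2)) :=
            div_le_div₀ zero_le_one hnum hdp hden2
        _ = (2 / Real.sqrt Real.pi) * (1/4 : ℝ) ^ k := by
            rw [div_pow, one_pow]
            field_simp
    have hgeo : Summable (fun k : ℕ => (2 / Real.sqrt Real.pi) * (1/4 : ℝ) ^ k) :=
      (summable_geometric_of_lt_one (by norm_num) (by norm_num)).mul_left _
    have hsa : Summable a := Summable.of_norm_bounded hgeo hbound
    -- split off the first two terms
    have hsplit := hsa.sum_add_tsum_nat_add 2
    have ha0 : a 0 = 2 / Real.sqrt Real.pi := by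
      rw [hadef]
      simp only [pow_zero, mul_zero, Nat.cast_zero, ascPochhammer_zero, Polynomial.eval_one,
        one_mul, mul_one, zero_add]
      rw [Gamma_three_halves]
      field_simp
    have ha1 : a 1 = -(x ^ 2) / (3 * Real.sqrt Real.pi * (ν + 3/2)) := by
      rw [hadef]
      simp only [pow_one, Nat.cast_one, ascPochhammer_one, Polynomial.eval_X, mul_one]
      have : ((1:ℝ) + 3/2) = 5/2 := by norm_num
      rw [this, Gamma_five_halves]
      ring_nf
    -- tail estimate
    set R := ∑' k : ℕ, a (k + 2) with hRdef
    have htail_bd : ∀ k : ℕ, ‖a (k + 2)‖ ≤ x ^ 4 * ((2 / Real.sqrt Real.pi) * (1/4 : ℝ) ^ k) := by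
      intro k
      rw [Real.norm_eq_abs, habs (k + 2)]
      have hxk : x ^ (2 * (k + 2)) = x ^ 4 * x ^ (2 * k) := by ring
      have hnum : x ^ (2 * (k + 2)) ≤ x ^ 4 * 1 := by
        rw [hxk]
        exact mul_le_mul_of_nonneg_left (pow_le_one₀ hx0.le hx1) (by positivity)
      have hden2 : (4:ℝ) ^ k * (Real.sqrt Real.pi / 2) ≤
          4 ^ (k + 2) * Real.Gamma ((↑(k + 2) : ℝ) + 3/2) * (ascPochhammer ℝ (k+2)).eval (ν + 3/2) := by
        have hg := Gamma_ge (k + 2)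
        rw [Gamma_three_halves] at hg
        have hp := poch_ge (k + 2) _ hν32
        have h4 : (0:ℝ) < 4 ^ k := by positivity
        have h44 : (4:ℝ) ^ k ≤ 4 ^ (k + 2) := pow_le_pow_right₀ (by norm_num) (by omega)
        have hg0 : (0:ℝ) < Real.Gamma ((↑(k+2):ℝ) + 3/2) :=
          Real.Gamma_pos_of_pos (by positivity)
        have hsp : (0:ℝ) ≤ Real.sqrt Real.pi / 2 := by positivity
        calc (4:ℝ) ^ k * (Real.sqrt Real.pi / 2)
            ≤ 4 ^ (k+2) * (Real.sqrt Real.pi / 2) := mul_le_mul_of_nonneg_right h44 hsp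
          _ ≤ 4 ^ (k+2) * Real.Gamma ((↑(k+2):ℝ) + 3/2) :=
              mul_le_mul_of_nonneg_left hg (by positivity)
          _ = 4 ^ (k+2) * Real.Gamma ((↑(k+2):ℝ) + 3/2) * 1 := (mul_one _).symm
          _ ≤ 4 ^ (k+2) * Real.Gamma ((↑(k+2):ℝ) + 3/2) * (ascPochhammer ℝ (k+2)).eval (ν + 3/2) :=
              mul_le_mul_of_nonneg_left hp (by positivity)
      have hdp : (0:ℝ) < (4:ℝ) ^ k * (Real.sqrt Real.pi / 2) := by positivity
      calc x ^ (2 * (k+2)) / (4 ^ (k+2) * Real.Gamma ((↑(k+2) : ℝ) + 3/2) * (ascPochhammer ℝ (k+2)).eval (ν + 3/2))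
          ≤ (x ^ 4 * 1) / ((4:ℝ) ^ k * (Real.sqrt Real.pi / 2)) :=
            div_le_div₀ (by positivity) hnum hdp hden2
        _ = x ^ 4 * ((2 / Real.sqrt Real.pi) * (1/4 : ℝ) ^ k) := by
            rw [div_pow, one_pow]
            field_simp
    have htail_summ : Summable (fun k : ℕ => a (k + 2)) := (summable_nat_add_iff 2).2 hsa
    have hgeo4 : Summable (fun k : ℕ => x ^ 4 * ((2 / Real.sqrt Real.pi) * (1/4 : ℝ) ^ k)) :=
      hgeo.mul_left _
    have hRbound : |R| ≤ x ^ 4 * (2 / Real.sqrt Real.pi) * (4/3) := by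
      have h1 : ‖R‖ ≤ ∑' k : ℕ, ‖a (k + 2)‖ :=
        norm_tsum_le_tsum_norm (htail_summ.norm)
      have h2 : ∑' k : ℕ, ‖a (k + 2)‖ ≤ ∑' k : ℕ, x ^ 4 * ((2 / Real.sqrt Real.pi) * (1/4 : ℝ) ^ k) :=
        Summable.tsum_le_tsum htail_bd htail_summ.norm hgeo4
      have h3 : ∑' k : ℕ, x ^ 4 * ((2 / Real.sqrt Real.pi) * (1/4 : ℝ) ^ k)
          = x ^ 4 * (2 / Real.sqrt Real.pi) * (4/3) := by
        rw [tsum_mul_left, tsum_mul_left, tsum_geometric_of_lt_one (by norm_num) (by norm_num)]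
        norm_num
        ring
      rw [Real.norm_eq_abs] at h1
      linarith
    -- total series value
    have hT : (Real.sqrt Real.pi / 2) * ∑' k : ℕ, a k
        = 1 - A * x ^ 2 + (Real.sqrt Real.pi / 2) * R := by
      rw [← hsplit]
      have hsum2 : ∑ i ∈ Finset.range 2, a i = a 0 + a 1 := by
        rw [Finset.sum_range_succ, Finset.sum_range_one]
      rw [hsum2, ha0, ha1]
      have hne : Real.sqrt Real.pi ≠ 0 := hsqpi.ne'
      have hne3 : (ν + 3/2) ≠ 0 := by linarith
      have e1 : (Real.sqrt Real.pi / 2) * (2 / Real.sqrt Real.pi) = 1 := by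
        field_simp
      have e2 : (Real.sqrt Real.pi / 2) * (-(x ^ 2) / (3 * Real.sqrt Real.pi * (ν + 3/2)))
          = -(A * x ^ 2) := by
        have hd1 : (0:ℝ) < 3 * Real.sqrt Real.pi * (ν + 3/2) := by nlinarith [hsqpi]
        have hd2 : (0:ℝ) < 3 * (2 * ν + 3) := by nlinarith
        have hrhs : -(A * x ^ 2) = (-(x ^ 2)) / (3 * (2 * ν + 3)) := by
          rw [hAdef]; ring
        rw [hrhs, div_mul_div_comm, div_eq_div_iff (by positivity) hd2.ne']
        ring
      calc (Real.sqrt Real.pi / 2) * ((2 / Real.sqrt Real.pi)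
            + -(x ^ 2) / (3 * Real.sqrt Real.pi * (ν + 3/2)) + R)
          = (Real.sqrt Real.pi / 2) * (2 / Real.sqrt Real.pi)
            + (Real.sqrt Real.pi / 2) * (-(x ^ 2) / (3 * Real.sqrt Real.pi * (ν + 3/2)))
            + (Real.sqrt Real.pi / 2) * R := by ring
        _ = 1 - A * x ^ 2 + (Real.sqrt Real.pi / 2) * R := by rw [e1, e2]; ring
    have hTbound : |(Real.sqrt Real.pi / 2) * ∑' k : ℕ, a k - (1 - A * x ^ 2)| ≤ (4/3) * x ^ 4 := by
      rw [hT]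
      have : |(Real.sqrt Real.pi / 2) * R| = (Real.sqrt Real.pi / 2) * |R| := by
        rw [abs_mul, abs_of_pos (by positivity)]
      have h4 : (Real.sqrt Real.pi / 2) * |R| ≤
          (Real.sqrt Real.pi / 2) * (x ^ 4 * (2 / Real.sqrt Real.pi) * (4/3)) :=
        mul_le_mul_of_nonneg_left hRbound (by positivity)
      have h5 : (Real.sqrt Real.pi / 2) * (x ^ 4 * (2 / Real.sqrt Real.pi) * (4/3)) = (4/3) * x ^ 4 := by
        field_simp
      simp only [add_sub_cancel_left]
      rw [this]
      linarith
    -- the product side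
    have hh0 : ∀ n, h 0 ≤ h n := fun n => hmono.monotone (Nat.zero_le n)
    have htle : ∀ n, x ^ 2 / (h n) ^ 2 ≤ 1/4 := by
      intro n
      rw [div_le_iff₀ (pow_pos (hpos n) 2)]
      nlinarith [hh0 n, hpos 0, hpos n]
    have htnn : ∀ n, (0:ℝ) ≤ x ^ 2 / (h n) ^ 2 := fun n => by positivity
    have hts : Summable (fun n => x ^ 2 / (h n) ^ 2) := by
      have := hsum.mul_left (x ^ 2)
      simpa [mul_one_div, div_eq_mul_inv] using this
    have htsum : ∑' n, x ^ 2 / (h n) ^ 2 = x ^ 2 * S := by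
      rw [hSdef, ← tsum_mul_left]
      congr 1; ext n; rw [mul_one_div]
    have hfac_pos : ∀ n, (0:ℝ) < 1 - x ^ 2 / (h n) ^ 2 := fun n => by linarith [htle n]
    have hlog : Summable (fun n => Real.log (1 - x ^ 2 / (h n) ^ 2)) := by
      apply Summable.of_norm_bounded (hts.mul_left 2)
      intro n
      set t := x ^ 2 / (h n) ^ 2 with htdef
      have ht0 := htnn n
      have ht1 := htle n
      have hpos1 : (0:ℝ) < 1 - t := by linarith
      have hlog_le : Real.log (1 - t) ≤ 0 := Real.log_nonpos (by linarith) (by linarith)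
      have hkey : -Real.log (1 - t) ≤ 2 * t := by
        rw [← Real.log_inv]
        have := Real.log_le_sub_one_of_pos (show (0:ℝ) < (1 - t)⁻¹ by positivity)
        have hinv : (1 - t)⁻¹ ≤ 1 + 2 * t := by
          rw [inv_le_iff_one_le_mul₀ hpos1]
          nlinarith
        linarith
      rw [Real.norm_eq_abs, abs_of_nonpos hlog_le]
      exact hkey
    have hP : HasProd (fun n => 1 - x ^ 2 / (h n) ^ 2) (∏' n : ℕ, (1 - x ^ 2 / (h n) ^ 2)) := by
      exact (Real.multipliable_of_summable_log hfac_pos hlog).hasProd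
    have hlow : 1 - x ^ 2 * S ≤ ∏' n : ℕ, (1 - x ^ 2 / (h n) ^ 2) := by
      apply ge_of_tendsto hP
      apply Filter.Eventually.of_forall
      intro F
      have h1 : 1 - ∑ n ∈ F, x ^ 2 / (h n) ^ 2 ≤ ∏ n ∈ F, (1 - x ^ 2 / (h n) ^ 2) :=
        weier_lower _ htnn (fun n => by linarith [htle n]) F
      have h2 : ∑ n ∈ F, x ^ 2 / (h n) ^ 2 ≤ x ^ 2 * S := by
        rw [← htsum]
        exact Summable.sum_le_tsum F (fun n _ => htnn n) hts
      linarith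
    have hup : (∏' n : ℕ, (1 - x ^ 2 / (h n) ^ 2)) ≤ 1 - x ^ 2 * S + (x ^ 2 * S) ^ 2 := by
      have hexp : HasProd (fun n => Real.exp (-(x ^ 2 / (h n) ^ 2))) (Real.exp (-(x ^ 2 * S))) := by
        have h1 : HasSum (fun n => -(x ^ 2 / (h n) ^ 2)) (-(x ^ 2 * S)) := by
          rw [← htsum]
          exact hts.hasSum.neg
        exact h1.rexp
      have h2 : (∏' n : ℕ, (1 - x ^ 2 / (h n) ^ 2)) ≤ Real.exp (-(x ^ 2 * S)) := by
        apply le_of_tendsto_of_tendsto' hP hexp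
        intro F
        apply Finset.prod_le_prod (fun n _ => (hfac_pos n).le)
        intro n _
        linarith [Real.add_one_le_exp (-(x ^ 2 / (h n) ^ 2))]
      have h3 := exp_neg_quad (x ^ 2 * S) (by positivity)
      linarith
    -- combine
    have hTP := hfact x
    rw [show (∑' k : ℕ, (-1 : ℝ) ^ k * x ^ (2 * k) /
          (4 ^ k * Real.Gamma ((k : ℝ) + 3/2) * (ascPochhammer ℝ k).eval (ν + 3/2)))
        = ∑' k, a k from rfl] at hTP
    rw [abs_le] at hTbound
    obtain ⟨hT1, hT2⟩ := hTbound
    rw [hTP] at hT1 hT2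
    rw [abs_le]
    constructor
    · -- A - S ≤ (4/3 + S²) x²
      have h1 : (A - S) * x ^ 2 ≤ ((4/3 + S^2) * x ^ 2) * x ^ 2 := by nlinarith
      have := le_of_mul_le_mul_right h1 hx2
      linarith
    · have h1 : (S - A) * x ^ 2 ≤ ((4/3 + S^2) * x ^ 2) * x ^ 2 := by nlinarith
      exact le_of_mul_le_mul_right h1 hx2
  -- conclude S = A
  have hK : (0:ℝ) < 4/3 + S^2 := by positivity
  have hfin : ∀ ε : ℝ, 0 < ε → |S - A| ≤ ε := by
    intro ε hε
    set x := min (min 1 (h 0 / 2)) (Real.sqrt (ε / (4/3 + S^2))) with hxdef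
    have hx0 : 0 < x := by
      apply lt_min (lt_min one_pos (by linarith [hpos 0]))
      exact Real.sqrt_pos.mpr (by positivity)
    have hx1 : x ≤ 1 := le_trans (min_le_left _ _) (min_le_left _ _)
    have hxh : x ≤ h 0 / 2 := le_trans (min_le_left _ _) (min_le_right _ _)
    have hxs : x ≤ Real.sqrt (ε / (4/3 + S^2)) := min_le_right _ _
    have h1 := key x hx0 hx1 hxh
    have h2 : x ^ 2 ≤ ε / (4/3 + S^2) := by
      have := pow_le_pow_left₀ hx0.le hxs 2
      rwa [Real.sq_sqrt (by positivity : (0:ℝ) ≤ ε / (4/3 + S^2))] at this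
    calc |S - A| ≤ (4/3 + S^2) * x ^ 2 := h1
      _ ≤ (4/3 + S^2) * (ε / (4/3 + S^2)) := mul_le_mul_of_nonneg_left h2 hK.le
      _ = ε := by field_simp
  by_contra hne
  have habs : 0 < |S - A| := by
    rw [abs_pos, sub_ne_zero]
    exact hne
  have := hfin (|S - A| / 2) (by linarith)
  linarith
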